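/- Let k be a field and let φ ∈ k(X) be a rational function whose derivative φ′(X) is not identically zero. Then for every integer n ≥ 0, the rational function φ^n(X) − t is separable over the field k(t); equivalently, writing the n-fold compositional iterate φ^n = f_n/g_n with f_n, g_n ∈ k[X] coprime, the polynomial f_n(X) − t·g_n(X) ∈ k(t)[X] is a separable polynomial. -/

import Mathlib

/-- Composition of rational functions: `(rcomp φ ψ) = φ ∘ ψ = f(ψ) / g(ψ)` where
`φ = f / g` in lowest terms. -/
noncomputable def rcomp {K : Type*} [Field K] (φ ψ : RatFunc K) : RatFunc K :=
  Polynomial.eval₂ (algebraMap K (RatFunc K)) ψ φ.num /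
    Polynomial.eval₂ (algebraMap K (RatFunc K)) ψ φ.denom

/-- The `n`-fold compositional iterate `φ^n` of a rational function, with `φ^0 = X`. -/
noncomputable def riter {K : Type*} [Field K] (φ : RatFunc K) : ℕ → RatFunc K
  | 0 => RatFunc.X
  | n + 1 => rcomp φ (riter φ n)

/-- For `ψ = f / g ∈ K(X)` in lowest terms, the numerator `f(X) - t • g(X)` of
`ψ(X) - t` as a polynomial in `X` over `K(t)`; here `K(t)` is realized as `RatFunc K`
(with variable `t = RatFunc.X`). -/
noncomputable def numeratorAtT {K : Type*} [Field K] (ψ : RatFunc K) :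
    Polynomial (RatFunc K) :=
  ψ.num.map (algebraMap K (RatFunc K)) -
    Polynomial.C RatFunc.X * ψ.denom.map (algebraMap K (RatFunc K))

section Helpers
open Polynomial
variable {k : Type*} [Field k]

/-- Wronskian-style numerator of the derivative. -/
noncomputable def wron (a b : k[X]) : k[X] := derivative a * b - a * derivative b

lemma wron_wd {a b c d : k[X]} (hb : b ≠ 0) (hd : d ≠ 0) (h : d * a = b * c) :
    RatFunc.mk (wron a b) (b ^ 2) = RatFunc.mk (wron c d) (d ^ 2) := by
  rw [RatFunc.mk_eq_mk (pow_ne_zero 2 hb) (pow_ne_zero 2 hd)]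
  have h2 := congrArg derivative h
  simp only [derivative_mul] at h2
  unfold wron
  linear_combination (b * d) * h2 - (derivative b * d + b * derivative d) * h

/-- Derivative of a rational function. -/
noncomputable def rder (x : RatFunc k) : RatFunc k :=
  x.liftOn (fun a b => RatFunc.mk (wron a b) (b ^ 2))
    (fun {p q p' q'} hq hq' h => wron_wd (nonZeroDivisors.ne_zero hq)
      (nonZeroDivisors.ne_zero hq')
      (by linear_combination h))


lemma rder_div {a b : k[X]} (hb : b ≠ 0) :
    rder (algebraMap k[X] (RatFunc k) a / algebraMap k[X] (RatFunc k) b) =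
      algebraMap k[X] (RatFunc k) (wron a b) / algebraMap k[X] (RatFunc k) (b ^ 2) := by
  rw [← RatFunc.mk_eq_div (wron a b)]
  rw [rder, RatFunc.liftOn_div]
  · intro p
    simp [RatFunc.mk_eq_div, wron]
  · intro p q p' q' hq hq' h
    exact wron_wd hq hq' (by linear_combination h)

lemma rder_algebraMap (p : k[X]) :
    rder (algebraMap k[X] (RatFunc k) p) = algebraMap k[X] (RatFunc k) (derivative p) := by
  have := rder_div (a := p) (b := 1) (k := k) one_ne_zero
  simpa [wron] using this

lemma rder_eq (x : RatFunc k) :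
    rder x = algebraMap k[X] (RatFunc k) (wron x.num x.denom) /
      algebraMap k[X] (RatFunc k) (x.denom ^ 2) := by
  conv_lhs => rw [← RatFunc.num_div_denom x]
  exact rder_div (RatFunc.denom_ne_zero x)

lemma algebraMap_ne_zero' {p : k[X]} (hp : p ≠ 0) :
    algebraMap k[X] (RatFunc k) p ≠ 0 := by
  simpa using RatFunc.algebraMap_ne_zero hp

lemma rder_mul (x y : RatFunc k) : rder (x * y) = rder x * y + x * rder y := by
  obtain ⟨a, b, hb, rfl⟩ : ∃ a b, b ≠ 0 ∧
      algebraMap k[X] (RatFunc k) a / algebraMap k[X] (RatFunc k) b = x :=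
    ⟨x.num, x.denom, RatFunc.denom_ne_zero x, RatFunc.num_div_denom x⟩
  obtain ⟨c, d, hd, rfl⟩ : ∃ c d, d ≠ 0 ∧
      algebraMap k[X] (RatFunc k) c / algebraMap k[X] (RatFunc k) d = y :=
    ⟨y.num, y.denom, RatFunc.denom_ne_zero y, RatFunc.num_div_denom y⟩
  rw [div_mul_div_comm, ← map_mul, ← map_mul, rder_div (mul_ne_zero hb hd),
    rder_div hb, rder_div hd]
  have hB := algebraMap_ne_zero' hb
  have hD := algebraMap_ne_zero' hd
  simp only [wron, derivative_mul, map_mul, map_sub, map_add, map_pow]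
  field_simp
  ring

lemma rder_add (x y : RatFunc k) : rder (x + y) = rder x + rder y := by
  obtain ⟨a, b, hb, rfl⟩ : ∃ a b, b ≠ 0 ∧
      algebraMap k[X] (RatFunc k) a / algebraMap k[X] (RatFunc k) b = x :=
    ⟨x.num, x.denom, RatFunc.denom_ne_zero x, RatFunc.num_div_denom x⟩
  obtain ⟨c, d, hd, rfl⟩ : ∃ c d, d ≠ 0 ∧
      algebraMap k[X] (RatFunc k) c / algebraMap k[X] (RatFunc k) d = y :=
    ⟨y.num, y.denom, RatFunc.denom_ne_zero y, RatFunc.num_div_denom y⟩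
  have hB := algebraMap_ne_zero' hb
  have hD := algebraMap_ne_zero' hd
  rw [div_add_div _ _ hB hD, ← map_mul, ← map_mul, ← map_mul, ← map_add,
    rder_div (mul_ne_zero hb hd), rder_div hb, rder_div hd]
  simp only [wron, derivative_mul, derivative_add, map_mul, map_sub, map_add, map_pow]
  field_simp
  ring

lemma rder_pow (x : RatFunc k) : ∀ n : ℕ, rder (x ^ (n + 1)) = (n + 1) * x ^ n * rder x
  | 0 => by simp
  | n + 1 => by
    rw [pow_succ, rder_mul, rder_pow x n]
    push_cast
    ring

lemma rder_aeval (x : RatFunc k) (p : k[X]) :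
    rder (Polynomial.aeval x p) = Polynomial.aeval x (derivative p) * rder x := by
  induction p using Polynomial.induction_on with
  | C a =>
      have : (Polynomial.aeval x) (C a) = algebraMap k[X] (RatFunc k) (C a) := by
        simp [Polynomial.aeval_def, Polynomial.eval₂_C, RatFunc.algebraMap_C]
      rw [this, rder_algebraMap]
      simp
  | add p q hp hq => simp [map_add, rder_add, hp, hq]; ring
  | monomial n a ih =>
      have h1 : (Polynomial.aeval x) (C a * X ^ (n + 1)) = algebraMap k (RatFunc k) a * x ^ (n + 1) := by
        simp
      rw [h1]
      have hc : rder (algebraMap k (RatFunc k) a) = 0 := by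
        have : (algebraMap k (RatFunc k)) a = algebraMap k[X] (RatFunc k) (C a) := by
          simp [RatFunc.algebraMap_C]
        rw [this, rder_algebraMap]; simp
      rw [rder_mul, hc, rder_pow]
      simp [derivative_mul, derivative_X_pow]
      push_cast
      ring

lemma rder_div' {x y : RatFunc k} (hy : y ≠ 0) :
    rder (x / y) * y ^ 2 = rder x * y - x * rder y := by
  have h : x = x / y * y := (div_mul_cancel₀ x hy).symm
  have h2 : rder x = rder (x / y) * y + x / y * rder y := by
    conv_lhs => rw [h]
    rw [rder_mul]
  have : rder x * y = rder (x / y) * y ^ 2 + x * rder y := by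
    rw [h2]
    field_simp
  linear_combination -this

/-- An element of `k(X)` that is not a constant is transcendental over `k`. -/
lemma transcendental_of_not_const {r : RatFunc k}
    (h : ∀ c : k, r ≠ algebraMap k (RatFunc k) c) : Transcendental k r := by
  intro halg
  have hint : IsIntegral k r := halg.isIntegral
  have hint2 : IsIntegral k[X] r := hint.tower_top
  obtain ⟨p, hp⟩ := IsIntegrallyClosed.isIntegral_iff.mp hint2
  have halgp : IsAlgebraic k p := by
    rw [← isAlgebraic_algebraMap_iff
      (IsFractionRing.injective k[X] (RatFunc k))]
    rw [hp]; exact halg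
  by_cases hdeg : p.natDegree = 0
  · obtain ⟨c, rfl⟩ := Polynomial.natDegree_eq_zero.mp hdeg
    exact h c (by rw [← hp]; simp [RatFunc.algebraMap_C])
  · have : Transcendental k p := by
      have := (Polynomial.transcendental_X k).aeval p hdeg
        (mem_nonZeroDivisors_of_ne_zero (Polynomial.leadingCoeff_ne_zero.mpr
          (fun h0 => hdeg (by simp [h0]))))
      simpa using this
    exact this halgp


lemma rcomp_eq (φ ψ : RatFunc k) :
    rcomp φ ψ = Polynomial.aeval ψ φ.num / Polynomial.aeval ψ φ.denom := by
  rw [rcomp, Polynomial.aeval_def, Polynomial.aeval_def]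

lemma aeval_ne_zero_of_transcendental {ψ : RatFunc k} (hT : Transcendental k ψ)
    {q : k[X]} (hq : q ≠ 0) : Polynomial.aeval ψ q ≠ 0 :=
  fun h0 => hT ⟨q, hq, h0⟩

lemma rcomp_props {φ ψ : RatFunc k} (hder : wron φ.num φ.denom ≠ 0)
    (hT : Transcendental k ψ) (hD : rder ψ ≠ 0) :
    Transcendental k (rcomp φ ψ) ∧ rder (rcomp φ ψ) ≠ 0 := by
  set P := Polynomial.aeval ψ φ.num with hP
  set Q := Polynomial.aeval ψ φ.denom with hQdef
  have hQ : Q ≠ 0 := aeval_ne_zero_of_transcendental hT (RatFunc.denom_ne_zero φ)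
  have hcomp : rcomp φ ψ = P / Q := rcomp_eq φ ψ
  constructor
  · apply transcendental_of_not_const
    intro c hc
    rw [hcomp, div_eq_iff hQ] at hc
    have key : Polynomial.aeval ψ (φ.num - C c * φ.denom) = 0 := by
      simp only [map_sub, map_mul, Polynomial.aeval_C, ← hP, ← hQdef]
      rw [hc]; ring
    by_cases hne : φ.num - C c * φ.denom = 0
    · have hnum : φ.num = C c * φ.denom := by linear_combination hne
      apply hder
      rw [wron, hnum, derivative_C_mul]
      ring
    · exact aeval_ne_zero_of_transcendental hT hne key
  · have hquot : rder (rcomp φ ψ) * Q ^ 2 = Polynomial.aeval ψ (wron φ.num φ.denom) * rder ψ := by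
      rw [hcomp, rder_div' hQ, rder_aeval, rder_aeval, wron]
      simp only [map_sub, map_mul, ← hP, ← hQdef]
      ring
    intro h0
    rw [h0, zero_mul] at hquot
    exact (mul_ne_zero (aeval_ne_zero_of_transcendental hT hder) hD) hquot.symm

lemma transcendental_ratfunc_X : Transcendental k (RatFunc.X : RatFunc k) := by
  apply transcendental_of_not_const
  intro c hc
  have h2 : algebraMap k (RatFunc k) c = algebraMap k[X] (RatFunc k) (C c) := by
    simp [RatFunc.algebraMap_C]
  rw [← RatFunc.algebraMap_X, h2] at hc
  exact Polynomial.X_ne_C c (IsFractionRing.injective k[X] (RatFunc k) hc)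

lemma rder_X : rder (RatFunc.X : RatFunc k) = 1 := by
  rw [← RatFunc.algebraMap_X, rder_algebraMap]
  simp

open IntermediateField in
lemma coprime_sub_t_map {f g c : k[X]} (hfg : IsCoprime f g) (hc : c ≠ 0) :
    IsCoprime (f.map (algebraMap k (RatFunc k)) -
        Polynomial.C RatFunc.X * g.map (algebraMap k (RatFunc k)))
      (c.map (algebraMap k (RatFunc k))) := by
  set K := RatFunc k
  letI L := AlgebraicClosure K
  rw [Polynomial.isCoprime_iff_aeval_ne_zero_of_isAlgClosed K L]
  intro α
  by_contra hcon
  push_neg at hcon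
  obtain ⟨hF, hc0⟩ := hcon
  have hcα : Polynomial.aeval α c = 0 := by
    rw [← Polynomial.aeval_map_algebraMap K α c]; exact hc0
  have hαalg : IsAlgebraic k α := ⟨c, hc, hcα⟩
  have hαint : IsIntegral k α := hαalg.isIntegral
  have hFα : Polynomial.aeval α f =
      algebraMap K L RatFunc.X * Polynomial.aeval α g := by
    have h1 := hF
    rw [map_sub, map_mul, Polynomial.aeval_C, Polynomial.aeval_map_algebraMap,
      Polynomial.aeval_map_algebraMap] at h1
    linear_combination h1
  by_cases hg0 : Polynomial.aeval α g = 0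
  · have hf0 : Polynomial.aeval α f = 0 := by rw [hFα, hg0, mul_zero]
    obtain ⟨a, b, hab⟩ := hfg
    have := congrArg (Polynomial.aeval α) hab
    simp [hf0, hg0] at this
  · -- t is algebraic over k: contradiction
    have hmem_f : Polynomial.aeval α f ∈ k⟮α⟯ :=
      IntermediateField.algebra_adjoin_le_adjoin k {α}
        (Polynomial.aeval_mem_adjoin_singleton k α)
    have hmem_g : Polynomial.aeval α g ∈ k⟮α⟯ :=
      IntermediateField.algebra_adjoin_le_adjoin k {α}
        (Polynomial.aeval_mem_adjoin_singleton k α)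
    have hmem_t : algebraMap K L RatFunc.X ∈ k⟮α⟯ := by
      have : algebraMap K L RatFunc.X = Polynomial.aeval α f / Polynomial.aeval α g := by
        rw [hFα, mul_div_cancel_right₀ _ hg0]
      rw [this]
      exact div_mem hmem_f hmem_g
    haveI : FiniteDimensional k k⟮α⟯ :=
      IntermediateField.adjoin.finiteDimensional hαint
    have hint : IsIntegral k (⟨algebraMap K L RatFunc.X, hmem_t⟩ : k⟮α⟯) :=
      IsIntegral.of_finite k _
    have hint2 : IsIntegral k (algebraMap k⟮α⟯ L
        (⟨algebraMap K L RatFunc.X, hmem_t⟩ : k⟮α⟯)) := hint.algebraMap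
    have halg : IsAlgebraic k (algebraMap K L RatFunc.X) := by
      have : (algebraMap k⟮α⟯ L) (⟨algebraMap K L RatFunc.X, hmem_t⟩ : k⟮α⟯) =
          algebraMap K L RatFunc.X := rfl
      rw [this] at hint2
      exact hint2.isAlgebraic
    rw [isAlgebraic_algebraMap_iff (algebraMap K L).injective] at halg
    exact transcendental_ratfunc_X halg

lemma separable_numeratorAtT {ψ : RatFunc k} (hW : wron ψ.num ψ.denom ≠ 0) :
    (numeratorAtT ψ).Separable := by
  set ι := algebraMap k (RatFunc k)
  set F : Polynomial (RatFunc k) := numeratorAtT ψ with hFdef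
  have hfg : IsCoprime ψ.num ψ.denom := RatFunc.isCoprime_num_denom ψ
  rw [Polynomial.Separable]
  have hF' : derivative F = (derivative ψ.num).map ι -
      Polynomial.C RatFunc.X * (derivative ψ.denom).map ι := by
    rw [hFdef, numeratorAtT]
    rw [derivative_sub, derivative_map, derivative_C_mul, derivative_map]
  have hkey : (ψ.denom.map ι) * derivative F =
      (wron ψ.num ψ.denom).map ι + ((derivative ψ.denom).map ι) * F := by
    rw [hF', hFdef, numeratorAtT, wron]
    simp only [Polynomial.map_sub, Polynomial.map_mul]
    ring
  have hFW : IsCoprime F ((wron ψ.num ψ.denom).map ι) := coprime_sub_t_map hfg hW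
  have h1 : IsCoprime F ((ψ.denom.map ι) * derivative F) := by
    rw [hkey]
    exact hFW.add_mul_right_right _
  exact h1.of_isCoprime_of_dvd_right (dvd_mul_left _ _)

lemma wron_ne_zero_of_rder {ψ : RatFunc k} (h : rder ψ ≠ 0) :
    wron ψ.num ψ.denom ≠ 0 :=
  fun h0 => h (by rw [rder_eq, h0, map_zero, zero_div])

end Helpers

/-- Let `k` be a field and `φ ∈ k(X)` with `φ′ ≠ 0` (equivalently
`num′ ⬝ denom - num ⬝ denom′ ≠ 0`).  Then for every `n ≥ 0`, writing the `n`-th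
compositional iterate as `φ^n = f_n / g_n` in lowest terms, the polynomial
`f_n(X) - t ⬝ g_n(X) ∈ k(t)[X]` is separable; i.e. `φ^n(X) - t` is separable
over `k(t)`. -/


theorem iterate_sub_t_separable
    (k : Type*) [Field k] (φ : RatFunc k)
    (hder : Polynomial.derivative φ.num * φ.denom
        - φ.num * Polynomial.derivative φ.denom ≠ 0) :
    ∀ n : ℕ, (numeratorAtT (riter φ n)).Separable := by
  have hW : wron φ.num φ.denom ≠ 0 := hder
  have main : ∀ n : ℕ, Transcendental k (riter φ n) ∧ rder (riter φ n) ≠ 0 := by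
    intro n
    induction n with
    | zero =>
        refine ⟨transcendental_ratfunc_X, ?_⟩
        show rder (riter φ 0) ≠ 0
        rw [riter, rder_X]
        exact one_ne_zero
    | succ n ih =>
        rw [riter]
        exact rcomp_props hW ih.1 ih.2
  intro n
  exact separable_numeratorAtT (wron_ne_zero_of_rder (main n).2)
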